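/- Let t be a positive integer and set a = −t; let γ_0 > 0, p ∈ (0,1), and let i ≥ 1 and r ≥ 1 be integers. For j ≥ 1 set w_j = γ_0 · Γ(j + t) · p^{j + t} / (Γ(1 + t) · j!). Then lim_{n→∞} [ ∑ over (m_1,…,m_n) ∈ ℕ^n with ∑_j j·m_j = n of ( ∏_j w_j^{m_j}/m_j! ) · ∏_{k=0}^{r−1}(m_i − k) ] / [ ∑ over (m_1,…,m_n) ∈ ℕ^n with ∑_j j·m_j = n of ∏_j w_j^{m_j}/m_j! ] = ( Γ(i + t) · γ_0 · p^{t} / (Γ(1 + t) · i!) )^r. -/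

import Mathlib

open Real Finset Filter


namespace FoF

lemma desc_prod (x r : ℕ) (h : r ≤ x) :
    ∏ k ∈ range r, ((x : ℝ) - (k : ℝ)) = (Nat.factorial x : ℝ) / (Nat.factorial (x - r) : ℝ) := by
  induction r with
  | zero => rw [Nat.sub_zero, div_self (Nat.cast_ne_zero.2 (Nat.factorial_ne_zero x) : (Nat.factorial x:ℝ) ≠ 0)]; simp
  | succ r ih =>
    have hr : r ≤ x := Nat.le_of_succ_le h
    rw [Finset.prod_range_succ, ih hr]
    set m := x - (r + 1) with hm
    have h1 : x - r = m + 1 := by omega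
    have hx : (x : ℝ) - (r : ℝ) = ((m + 1 : ℕ) : ℝ) := by
      rw [← h1, Nat.cast_sub hr]
    rw [h1, hx, Nat.factorial_succ]
    have h2 : (Nat.factorial m : ℝ) ≠ 0 := Nat.cast_ne_zero.2 (Nat.factorial_ne_zero _)
    have h3 : ((m + 1 : ℕ) : ℝ) ≠ 0 := by positivity
    push_cast
    field_simp

def T (N n : ℕ) : Finset (Fin N → ℕ) :=
  (Fintype.piFinset fun _ : Fin N => Finset.range (n + 1)).filter
    (fun f => ∑ k : Fin N, (k.1 + 1) * f k = n)

lemma mem_T {N n : ℕ} {f : Fin N → ℕ} : f ∈ T N n ↔ ∑ k : Fin N, (k.1 + 1) * f k = n := by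
  constructor
  · exact fun h => (Finset.mem_filter.1 h).2
  · intro h
    refine Finset.mem_filter.2 ⟨Fintype.mem_piFinset.2 fun k => Finset.mem_range.2 ?_, h⟩
    have h1 : (k.1 + 1) * f k ≤ n := h ▸ Finset.single_le_sum
      (f := fun k : Fin N => (k.1 + 1) * f k) (fun _ _ => Nat.zero_le _) (Finset.mem_univ k)
    have : f k ≤ (k.1 + 1) * f k := Nat.le_mul_of_pos_left _ (Nat.succ_pos _)
    omega

lemma zero_of_mem_T {N n : ℕ} {f : Fin N → ℕ} (h : f ∈ T N n) {k : Fin N} (hk : n ≤ k.1) :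
    f k = 0 := by
  have h1 : (k.1 + 1) * f k ≤ n := (mem_T.1 h) ▸ Finset.single_le_sum
    (f := fun k : Fin N => (k.1 + 1) * f k) (fun _ _ => Nat.zero_le _) (Finset.mem_univ k)
  nlinarith [Nat.zero_le (f k)]

noncomputable def S (v : ℕ → ℝ) (N n : ℕ) : ℝ :=
  ∑ f ∈ T N n, ∏ k : Fin N, v (k.1 + 1) ^ (f k) / (Nat.factorial (f k) : ℝ)


section Restrict
variable {M : Type*} [CommMonoid M]

@[to_additive]
lemma prod_restrict {N m : ℕ} (hm : m ≤ N) (f : Fin N → ℕ) (g : ℕ → ℕ → M)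
    (hg : ∀ j, g j 0 = 1) (hz : ∀ k : Fin N, m ≤ k.1 → f k = 0) :
    ∏ k : Fin N, g k.1 (f k) = ∏ k : Fin m, g k.1 (f (Fin.castLE hm k)) := by
  set F : ℕ → M := fun j => if h : j < N then g j (f ⟨j, h⟩) else 1 with hF
  have e1 : ∏ k : Fin N, g k.1 (f k) = ∏ j ∈ range N, F j := by
    rw [← Fin.prod_univ_eq_prod_range F N]
    exact Finset.prod_congr rfl fun k _ => by simp [hF, k.2]
  have e2 : ∏ j ∈ range N, F j = ∏ j ∈ range m, F j := by
    refine (Finset.prod_subset (Finset.range_subset_range.2 hm) fun j hj hj' => ?_).symm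
    have h1 : j < N := Finset.mem_range.1 hj
    have h2 : m ≤ j := not_lt.1 fun hc => hj' (Finset.mem_range.2 hc)
    simp [hF, h1, hz ⟨j, h1⟩ h2, hg]
  have e3 : ∏ j ∈ range m, F j = ∏ k : Fin m, g k.1 (f (Fin.castLE hm k)) := by
    rw [← Fin.prod_univ_eq_prod_range F m]
    exact Finset.prod_congr rfl fun k _ => by simp [hF, lt_of_lt_of_le k.2 hm]; rfl
  rw [e1, e2, e3]

end Restrict


lemma S_stable (v : ℕ → ℝ) {N m : ℕ} (hm : m ≤ N) : S v N m = S v m m := by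
  unfold S
  refine Finset.sum_nbij' (fun f => fun k : Fin m => f (Fin.castLE hm k))
    (fun g => fun k : Fin N => if h : k.1 < m then g ⟨k.1, h⟩ else 0) ?_ ?_ ?_ ?_ ?_
  · intro f hf
    rw [mem_T]
    rw [← sum_restrict hm f (fun j x => (j+1) * x) (fun j => by simp)
      (fun k hk => zero_of_mem_T hf hk)]
    exact mem_T.1 hf
  · intro g hg
    rw [mem_T]
    have hz : ∀ k : Fin N, m ≤ k.1 → (if h : k.1 < m then g ⟨k.1, h⟩ else 0) = 0 := by
      intro k hk; rw [dif_neg (not_lt.2 hk)]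
    rw [sum_restrict hm _ (fun j x => (j+1) * x) (fun j => by simp) hz]
    have : ∀ k : Fin m, (if h : (Fin.castLE hm k).1 < m then g ⟨(Fin.castLE hm k).1, h⟩ else 0) = g k := by
      intro k
      simp only [Fin.coe_castLE, k.2, dif_pos]
    rw [Finset.sum_congr rfl fun k _ => by rw [this k]]
    exact mem_T.1 hg
  · intro f hf
    funext k
    dsimp only
    by_cases h : k.1 < m
    · simp only [dif_pos h]; rfl
    · rw [dif_neg h]; exact (zero_of_mem_T hf (not_lt.1 h)).symm
  · intro g hg
    funext k
    dsimp only
    simp only [Fin.coe_castLE, k.2, dif_pos]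
  · intro f hf
    exact prod_restrict hm f (fun j x => v (j+1) ^ x / (Nat.factorial x : ℝ))
      (fun j => by simp) (fun k hk => zero_of_mem_T hf hk)

lemma S_scale (a : ℕ → ℝ) (p : ℝ) (N n : ℕ) :
    S (fun j => a j * p ^ j) N n = p ^ n * S a N n := by
  unfold S
  rw [Finset.mul_sum]
  refine Finset.sum_congr rfl fun f hf => ?_
  have hsum : ∑ k : Fin N, (k.1 + 1) * f k = n := mem_T.1 hf
  calc ∏ k : Fin N, (a (k.1+1) * p ^ (k.1+1)) ^ f k / (Nat.factorial (f k) : ℝ)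
      = ∏ k : Fin N, (p ^ ((k.1+1) * f k)) * (a (k.1+1) ^ f k / (Nat.factorial (f k) : ℝ)) := by
        refine Finset.prod_congr rfl fun k _ => ?_
        rw [mul_pow, pow_mul]
        ring
    _ = (∏ k : Fin N, p ^ ((k.1+1) * f k)) * ∏ k : Fin N, a (k.1+1) ^ f k / (Nat.factorial (f k) : ℝ) := by
        rw [Finset.prod_mul_distrib]
    _ = p ^ n * ∏ k : Fin N, a (k.1+1) ^ f k / (Nat.factorial (f k) : ℝ) := by
        rw [Finset.prod_pow_eq_pow_sum, hsum]

lemma S_pos (v : ℕ → ℝ) (hv : ∀ j, 1 ≤ j → 0 < v j) (n : ℕ) : 0 < S v n n := by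
  unfold S
  refine Finset.sum_pos' (fun f _ => Finset.prod_nonneg fun k _ => ?_) ?_
  · have h0 := hv (k.1+1) (Nat.le_add_left 1 k.1)
    positivity
  rcases Nat.eq_zero_or_pos n with h0 | hn
  · subst h0
    refine ⟨fun k => 0, mem_T.2 (by simp), by simp⟩
  · refine ⟨fun k => if k = (⟨0, hn⟩ : Fin n) then n else 0, mem_T.2 ?_, ?_⟩
    · rw [Finset.sum_eq_single (⟨0, hn⟩ : Fin n)]
      · simp
      · intro k _ hk; simp [hk]
      · intro h; exact absurd (Finset.mem_univ _) h
    · refine Finset.prod_pos fun k _ => ?_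
      have h0 := hv (k.1+1) (Nat.le_add_left 1 k.1)
      positivity


lemma sum_update_T {N : ℕ} (f : Fin N → ℕ) (k0 : Fin N) (y : ℕ) :
    ∑ k : Fin N, (k.1 + 1) * (Function.update f k0 y) k
      = (k0.1 + 1) * y + ∑ k ∈ Finset.univ.erase k0, (k.1 + 1) * f k := by
  rw [← Finset.add_sum_erase _ (fun k : Fin N => (k.1+1) * (Function.update f k0 y) k)
    (Finset.mem_univ k0)]
  rw [Function.update_self]
  congr 1
  refine Finset.sum_congr rfl fun k hk => ?_
  rw [Function.update_of_ne (Finset.ne_of_mem_erase hk)]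

lemma sum_split_T {N : ℕ} (f : Fin N → ℕ) (k0 : Fin N) :
    ∑ k : Fin N, (k.1 + 1) * f k
      = (k0.1 + 1) * f k0 + ∑ k ∈ Finset.univ.erase k0, (k.1 + 1) * f k := by
  rw [← Finset.add_sum_erase _ (fun k : Fin N => (k.1+1) * f k) (Finset.mem_univ k0)]

lemma S_shift (v : ℕ → ℝ) (n : ℕ) (k0 : Fin n) (r : ℕ) (hd : (k0.1 + 1) * r ≤ n) :
    ∑ f ∈ T n n, (∏ k ∈ range r, ((f k0 : ℝ) - (k : ℝ)))
        * ∏ k : Fin n, v (k.1 + 1) ^ (f k) / (Nat.factorial (f k) : ℝ)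
      = v (k0.1 + 1) ^ r * S v n (n - (k0.1 + 1) * r) := by
  unfold S
  rw [Finset.mul_sum]
  rw [← Finset.sum_filter_of_ne (p := fun f : Fin n → ℕ => r ≤ f k0) (fun f _ hne => by
    by_contra hlt
    refine hne ?_
    have hz : (fun k : ℕ => ((f k0 : ℝ)) - (k : ℝ)) (f k0) = 0 := by simp
    rw [Finset.prod_eq_zero (Finset.mem_range.2 (not_le.1 hlt)) hz, zero_mul])]
  refine Finset.sum_nbij' (fun f => Function.update f k0 (f k0 - r))
    (fun g => Function.update g k0 (g k0 + r)) ?_ ?_ ?_ ?_ ?_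
  · intro f hf
    obtain ⟨hfT, hfr⟩ := Finset.mem_filter.1 hf
    have hsum := mem_T.1 hfT
    rw [sum_split_T f k0] at hsum
    rw [mem_T, sum_update_T]
    have hmul : (k0.1+1) * (f k0) = (k0.1+1) * (f k0 - r) + (k0.1+1) * r := by
      rw [← Nat.mul_add, Nat.sub_add_cancel hfr]
    omega
  · intro g hg
    have hsum := mem_T.1 hg
    rw [sum_split_T g k0] at hsum
    refine Finset.mem_filter.2 ⟨mem_T.2 ?_, ?_⟩
    · rw [sum_update_T]
      have hmul : (k0.1+1) * (g k0 + r) = (k0.1+1) * (g k0) + (k0.1+1) * r := by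
        rw [Nat.mul_add]
      omega
    · rw [Function.update_self]; omega
  · intro f hf
    have hfr : r ≤ f k0 := (Finset.mem_filter.1 hf).2
    rw [Function.update_self, Function.update_idem, Nat.sub_add_cancel hfr,
      Function.update_eq_self]
  · intro g hg
    rw [Function.update_self, Function.update_idem, Nat.add_sub_cancel,
      Function.update_eq_self]
  · intro f hf
    have hfr : r ≤ f k0 := (Finset.mem_filter.1 hf).2
    set x := f k0 with hx
    have e1 : ∏ k : Fin n, v (k.1+1) ^ f k / (Nat.factorial (f k) : ℝ)
        = (v (k0.1+1) ^ x / (Nat.factorial x : ℝ))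
          * ∏ k ∈ Finset.univ.erase k0, v (k.1+1) ^ f k / (Nat.factorial (f k) : ℝ) := by
      rw [Finset.mul_prod_erase _ (fun k : Fin n => v (k.1+1) ^ f k / (Nat.factorial (f k) : ℝ))
        (Finset.mem_univ k0)]
    have e2 : ∏ k : Fin n, v (k.1+1) ^ (Function.update f k0 (x - r)) k
          / (Nat.factorial ((Function.update f k0 (x - r)) k) : ℝ)
        = (v (k0.1+1) ^ (x - r) / (Nat.factorial (x - r) : ℝ))
          * ∏ k ∈ Finset.univ.erase k0, v (k.1+1) ^ f k / (Nat.factorial (f k) : ℝ) := by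
      rw [← Finset.mul_prod_erase _
        (fun k : Fin n => v (k.1+1) ^ (Function.update f k0 (x-r)) k
          / (Nat.factorial ((Function.update f k0 (x-r)) k) : ℝ)) (Finset.mem_univ k0)]
      rw [Function.update_self]
      congr 1
      refine Finset.prod_congr rfl fun k hk => ?_
      rw [Function.update_of_ne (Finset.ne_of_mem_erase hk)]
    rw [e1, e2, desc_prod x r hfr]
    have hfac1 : (Nat.factorial x : ℝ) ≠ 0 := Nat.cast_ne_zero.2 (Nat.factorial_ne_zero _)
    have hfac2 : (Nat.factorial (x - r) : ℝ) ≠ 0 := Nat.cast_ne_zero.2 (Nat.factorial_ne_zero _)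
    have hpow : v (k0.1+1) ^ x = v (k0.1+1) ^ r * v (k0.1+1) ^ (x - r) := by
      rw [← pow_add]
      congr 1
      omega
    rw [hpow]
    field_simp


lemma S_rec (v : ℕ → ℝ) (n : ℕ) :
    (n : ℝ) * S v n n
      = ∑ j ∈ range n, (((j : ℕ) + 1 : ℝ) * v (j + 1)) * S v (n - (j + 1)) (n - (j + 1)) := by
  have shift1 : ∀ k : Fin n,
      (∑ f ∈ T n n, (f k : ℝ) * ∏ k' : Fin n, v (k'.1 + 1) ^ (f k') / (Nat.factorial (f k') : ℝ))
        = v (k.1 + 1) * S v (n - (k.1 + 1)) (n - (k.1 + 1)) := by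
    intro k
    have hd : (k.1 + 1) * 1 ≤ n := by have := k.2; omega
    have hs := S_shift v n k 1 hd
    simp only [mul_one, pow_one, Finset.prod_range_one, Nat.cast_zero, sub_zero] at hs
    rw [S_stable v (Nat.sub_le n (k.1 + 1))] at hs
    exact hs
  have step1 : (n : ℝ) * (∑ f ∈ T n n, ∏ k : Fin n, v (k.1 + 1) ^ (f k) / (Nat.factorial (f k) : ℝ))
      = ∑ k : Fin n, ((k.1 : ℝ) + 1) * v (k.1 + 1)
          * S v (n - (k.1 + 1)) (n - (k.1 + 1)) := by
    rw [Finset.mul_sum]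
    have e1 : ∀ f ∈ T n n, (n : ℝ) * ∏ k : Fin n, v (k.1+1) ^ (f k) / (Nat.factorial (f k) : ℝ)
        = ∑ k : Fin n, ((k.1 : ℝ) + 1) * ((f k : ℝ)
            * ∏ k' : Fin n, v (k'.1+1) ^ (f k') / (Nat.factorial (f k') : ℝ)) := by
      intro f hf
      have hsum := mem_T.1 hf
      calc (n : ℝ) * ∏ k : Fin n, v (k.1+1) ^ (f k) / (Nat.factorial (f k) : ℝ)
          = ((∑ k : Fin n, (k.1 + 1) * f k : ℕ) : ℝ)
            * ∏ k : Fin n, v (k.1+1) ^ (f k) / (Nat.factorial (f k) : ℝ) := by rw [hsum]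
        _ = (∑ k : Fin n, ((k.1 : ℝ) + 1) * (f k : ℝ))
            * ∏ k : Fin n, v (k.1+1) ^ (f k) / (Nat.factorial (f k) : ℝ) := by push_cast; ring_nf
        _ = _ := by rw [Finset.sum_mul]; exact Finset.sum_congr rfl fun k _ => by ring
    rw [Finset.sum_congr rfl e1, Finset.sum_comm]
    refine Finset.sum_congr rfl fun k _ => ?_
    rw [← Finset.mul_sum, shift1 k]
    ring
  rw [show S v n n = ∑ f ∈ T n n, ∏ k : Fin n, v (k.1 + 1) ^ (f k) / (Nat.factorial (f k) : ℝ) from rfl, step1]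
  exact Fin.sum_univ_eq_sum_range
    (fun j => ((j : ℝ) + 1) * v (j + 1) * S v (n - (j + 1)) (n - (j + 1))) n




lemma ratio_limit (A b : ℕ → ℝ) (C : ℝ) (hC : 0 ≤ C)
    (hApos : ∀ n, 0 < A n)
    (hrec : ∀ n : ℕ, (n : ℝ) * A n = ∑ j ∈ range n, b (j + 1) * A (n - (j + 1)))
    (hb1 : 0 < b 1)
    (hmono : ∀ j : ℕ, 1 ≤ j → b j ≤ b (j + 1))
    (hdiff : ∀ j : ℕ, 1 ≤ j → b (j + 1) - b j ≤ (C / j) * b (j + 1)) :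
    Tendsto (fun n => A (n - 1) / A n) atTop (nhds 1) := by
  set c : ℕ → ℝ := fun n => (n : ℝ) * A n with hc
  have hbpos : ∀ j : ℕ, 1 ≤ j → 0 < b j := by
    intro j hj
    induction j with
    | zero => omega
    | succ m ih =>
      rcases Nat.eq_zero_or_pos m with h0 | hm
      · subst h0; exact hb1
      · exact lt_of_lt_of_le (ih hm) (hmono m hm)
  have cpos : ∀ n : ℕ, 1 ≤ n → 0 < c n := by
    intro n hn
    have : (0:ℝ) < (n:ℝ) := by exact_mod_cast hn
    exact mul_pos this (hApos n)
  have hsplit : ∀ n : ℕ, c (n + 1)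
      = b 1 * A n + ∑ j ∈ range n, b (j + 2) * A (n - 1 - j) := by
    intro n
    have e1 : c (n+1) = ∑ j ∈ range (n+1), b (j+1) * A (n - j) := by
      rw [hc]; dsimp only; rw [hrec (n+1)]
      exact Finset.sum_congr rfl fun j hj => by
        rw [show n + 1 - (j + 1) = n - j from by omega]
    have e2 : ∑ j ∈ range (n+1), b (j+1) * A (n - j)
        = (∑ j ∈ range n, b (j+2) * A (n - 1 - j)) + b 1 * A n := by
      rw [Finset.sum_range_succ']
      congr 1
      exact Finset.sum_congr rfl fun j hj => by
        rw [show n - (j + 1) = n - 1 - j from by omega]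
    rw [e1, e2]
    ring
  have hΔ : ∀ n : ℕ, c (n + 1) - c n
      = b 1 * A n + ∑ j ∈ range n, (b (j + 2) - b (j + 1)) * A (n - 1 - j) := by
    intro n
    have e3 : c n = ∑ j ∈ range n, b (j+1) * A (n - 1 - j) := by
      rw [hc]; dsimp only; rw [hrec n]
      exact Finset.sum_congr rfl fun j hj => by
        rw [show n - (j + 1) = n - 1 - j from by omega]
    rw [hsplit n, e3]
    have e4 : ∑ j ∈ range n, (b (j + 2) - b (j + 1)) * A (n - 1 - j)
        = ∑ j ∈ range n, (b (j + 2) * A (n - 1 - j) - b (j + 1) * A (n - 1 - j)) :=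
      Finset.sum_congr rfl fun j _ => sub_mul _ _ _
    rw [e4, Finset.sum_sub_distrib]
    ring
  have cmono : ∀ n : ℕ, c n ≤ c (n + 1) := by
    intro n
    have h := hΔ n
    have h1 : 0 ≤ ∑ j ∈ range n, (b (j + 2) - b (j + 1)) * A (n - 1 - j) :=
      Finset.sum_nonneg fun j _ => mul_nonneg
        (sub_nonneg.2 (hmono (j+1) (by omega))) (le_of_lt (hApos _))
    nlinarith [hApos n]
  have cmono' : Monotone c := monotone_nat_of_le_succ cmono
  have key : ∀ ε : ℝ, 0 < ε → ∃ N : ℕ, ∀ n ≥ N, c (n + 1) - c n ≤ ε * c (n + 1) := by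
    intro ε hε
    obtain ⟨J0, hJ0⟩ := exists_nat_gt (2 * C / ε)
    set J := max J0 1 with hJdef
    have hJ1 : 1 ≤ J := le_max_right _ _
    have hJε : C / (J : ℝ) ≤ ε / 2 := by
      have hJpos : (0:ℝ) < (J:ℝ) := by exact_mod_cast hJ1
      rw [div_le_div_iff₀ hJpos (by norm_num : (0:ℝ) < 2)]
      have h2 : (2 * C / ε) < (J0 : ℝ) := hJ0
      have h3 : (J0 : ℝ) ≤ (J : ℝ) := by exact_mod_cast le_max_left J0 1
      rw [div_lt_iff₀ hε] at h2
      nlinarith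
    obtain ⟨K, hK⟩ := exists_nat_gt (2 * b (J + 1) / ε)
    refine ⟨J + K + 1, fun n hn => ?_⟩
    have hJn : J ≤ n := by omega
    have hnJ1 : 1 ≤ n - J := by omega
    have hnJpos : (0:ℝ) < ((n - J : ℕ) : ℝ) := by exact_mod_cast hnJ1
    have hbound : b (J + 1) ≤ (ε / 2) * ((n - J : ℕ) : ℝ) := by
      have h1 : (K : ℝ) ≤ ((n - J : ℕ) : ℝ) := by exact_mod_cast (by omega : K ≤ n - J)
      have h2 : 2 * b (J + 1) / ε < (K : ℝ) := hK
      rw [div_lt_iff₀ hε] at h2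
      nlinarith
    have hcn1pos : 0 < c (n + 1) := cpos (n+1) (by omega)
    -- bound on A m for m between n - J and n + 1
    have hA_le : ∀ m : ℕ, n - J ≤ m → m ≤ n + 1 →
        A m ≤ c (n + 1) / ((n - J : ℕ) : ℝ) := by
      intro m hm1 hm2
      have hm0 : 1 ≤ m := le_trans hnJ1 hm1
      have hmpos : (0:ℝ) < (m:ℝ) := by exact_mod_cast hm0
      have : A m = c m / (m : ℝ) := by
        rw [hc]; dsimp only; field_simp
      rw [this]
      have h1 : c m ≤ c (n + 1) := cmono' hm2
      have h2 : ((n - J : ℕ) : ℝ) ≤ (m : ℝ) := by exact_mod_cast hm1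
      exact div_le_div₀ (le_of_lt hcn1pos) h1 hnJpos h2
    -- split the sum
    rw [hΔ n, ← Finset.sum_range_add_sum_Ico _ hJn]
    set Q := c (n + 1) / ((n - J : ℕ) : ℝ) with hQ
    have hS1 : b 1 * A n + ∑ j ∈ range J, (b (j + 2) - b (j + 1)) * A (n - 1 - j)
        ≤ b (J + 1) * Q := by
      have h1 : b 1 * A n ≤ b 1 * Q :=
        mul_le_mul_of_nonneg_left (hA_le n (by omega) (by omega)) (le_of_lt hb1)
      have h2 : ∑ j ∈ range J, (b (j + 2) - b (j + 1)) * A (n - 1 - j)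
          ≤ ∑ j ∈ range J, (b (j + 2) - b (j + 1)) * Q := by
        refine Finset.sum_le_sum fun j hj => ?_
        have hjJ : j < J := Finset.mem_range.1 hj
        exact mul_le_mul_of_nonneg_left (hA_le (n - 1 - j) (by omega) (by omega))
          (sub_nonneg.2 (hmono (j+1) (by omega)))
      have h3 : ∑ j ∈ range J, (b (j + 2) - b (j + 1)) = b (J + 1) - b 1 := by
        have := Finset.sum_range_sub (fun j => b (j + 1)) J
        simpa using this
      calc b 1 * A n + ∑ j ∈ range J, (b (j + 2) - b (j + 1)) * A (n - 1 - j)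
          ≤ b 1 * Q + ∑ j ∈ range J, (b (j + 2) - b (j + 1)) * Q := by linarith
        _ = (b 1 + ∑ j ∈ range J, (b (j + 2) - b (j + 1))) * Q := by
            rw [← Finset.sum_mul]; ring
        _ = b (J + 1) * Q := by rw [h3]; ring
    have hS1' : b (J + 1) * Q ≤ (ε / 2) * c (n + 1) := by
      have h4 : b (J + 1) / ((n - J : ℕ) : ℝ) ≤ ε / 2 := by
        rw [div_le_iff₀ hnJpos]; linarith
      calc b (J + 1) * Q = (b (J + 1) / ((n - J : ℕ) : ℝ)) * c (n + 1) := by rw [hQ]; ring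
        _ ≤ (ε / 2) * c (n + 1) := mul_le_mul_of_nonneg_right h4 (le_of_lt hcn1pos)
    have hS2 : ∑ j ∈ Ico J n, (b (j + 2) - b (j + 1)) * A (n - 1 - j)
        ≤ (ε / 2) * c (n + 1) := by
      have hterm : ∀ j ∈ Ico J n, (b (j + 2) - b (j + 1)) * A (n - 1 - j)
          ≤ (ε / 2) * (b (j + 2) * A (n - 1 - j)) := by
        intro j hj
        have hjJ : J ≤ j := (Finset.mem_Ico.1 hj).1
        have hd := hdiff (j + 1) (by omega)
        have hcast : ((j : ℝ) + 1) = ((j + 1 : ℕ) : ℝ) := by push_cast; ring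
        have hJle : (J : ℝ) ≤ ((j + 1 : ℕ) : ℝ) := by exact_mod_cast (by omega : J ≤ j + 1)
        have hJpos : (0:ℝ) < (J : ℝ) := by exact_mod_cast hJ1
        have hjc : C / ((j + 1 : ℕ) : ℝ) ≤ ε / 2 := by
          refine le_trans ?_ hJε
          gcongr
        have hApo := le_of_lt (hApos (n - 1 - j))
        have hbpo := le_of_lt (hbpos (j + 2) (by omega))
        have h5 : b (j + 2) - b (j + 1) ≤ (ε / 2) * b (j + 2) := by
          have h5a : C / ((j + 1 : ℕ) : ℝ) * b (j + 2) ≤ (ε / 2) * b (j + 2) :=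
            mul_le_mul_of_nonneg_right hjc hbpo
          have hd' : b (j + 2) - b (j + 1) ≤ C / ((j + 1 : ℕ) : ℝ) * b (j + 2) := by
            have h := hdiff (j + 1) (by omega)
            norm_num at h ⊢
            convert h using 3 <;> push_cast <;> ring
          linarith
        calc (b (j + 2) - b (j + 1)) * A (n - 1 - j)
            ≤ ((ε / 2) * b (j + 2)) * A (n - 1 - j) := mul_le_mul_of_nonneg_right h5 hApo
          _ = (ε / 2) * (b (j + 2) * A (n - 1 - j)) := by ring
      have h6 : ∑ j ∈ Ico J n, (b (j + 2) - b (j + 1)) * A (n - 1 - j)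
          ≤ ∑ j ∈ Ico J n, (ε / 2) * (b (j + 2) * A (n - 1 - j)) :=
        Finset.sum_le_sum hterm
      have h7 : ∑ j ∈ Ico J n, (ε / 2) * (b (j + 2) * A (n - 1 - j))
          = (ε / 2) * ∑ j ∈ Ico J n, b (j + 2) * A (n - 1 - j) := by
        rw [Finset.mul_sum]
      have h8 : ∑ j ∈ Ico J n, b (j + 2) * A (n - 1 - j)
          ≤ ∑ j ∈ range n, b (j + 2) * A (n - 1 - j) := by
        refine Finset.sum_le_sum_of_subset_of_nonneg ?_ fun j hj _ => ?_
        · intro j hj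
          exact Finset.mem_range.2 (Finset.mem_Ico.1 hj).2
        · exact mul_nonneg (le_of_lt (hbpos (j + 2) (by omega))) (le_of_lt (hApos _))
      have h9 : ∑ j ∈ range n, b (j + 2) * A (n - 1 - j) ≤ c (n + 1) := by
        rw [hsplit n]
        nlinarith [hApos n]
      calc ∑ j ∈ Ico J n, (b (j + 2) - b (j + 1)) * A (n - 1 - j)
          ≤ (ε / 2) * ∑ j ∈ Ico J n, b (j + 2) * A (n - 1 - j) := by rw [← h7]; exact h6
        _ ≤ (ε / 2) * c (n + 1) := by
            refine mul_le_mul_of_nonneg_left (le_trans h8 h9) (le_of_lt (half_pos hε))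
    linarith [hS1, hS1', hS2]
  -- convert to the ratio limit
  have hT1 : Tendsto (fun n => c n / c (n + 1)) atTop (nhds 1) := by
    rw [Metric.tendsto_atTop]
    intro ε hε
    obtain ⟨N, hN⟩ := key (ε / 2) (half_pos hε)
    refine ⟨N + 1, fun n hn => ?_⟩
    have h1 : 1 ≤ n := by omega
    have hc1 : 0 < c (n + 1) := cpos _ (by omega)
    have hknb := hN n (by omega)
    have hub : c n / c (n + 1) ≤ 1 := div_le_one_of_le₀ (cmono n) (le_of_lt hc1)
    have hlb : 1 - ε / 2 ≤ c n / c (n + 1) := by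
      rw [le_div_iff₀ hc1]; nlinarith
    rw [Real.dist_eq]
    have habs : |c n / c (n + 1) - 1| ≤ ε / 2 := abs_le.2 ⟨by linarith, by linarith⟩
    linarith
  have hT2 : Tendsto (fun n : ℕ => 1 + 1 / (n : ℝ)) atTop (nhds 1) := by
    have h0 := (tendsto_const_nhds : Tendsto (fun _ : ℕ => (1:ℝ)) atTop (nhds 1)).add
      tendsto_one_div_atTop_nhds_zero_nat
    rw [add_zero] at h0
    exact h0
  have hT3 : Tendsto (fun n : ℕ => A n / A (n + 1)) atTop (nhds 1) := by
    have heq : (fun n : ℕ => (c n / c (n + 1)) * (1 + 1 / (n : ℝ)))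
        =ᶠ[atTop] (fun n : ℕ => A n / A (n + 1)) := by
      filter_upwards [eventually_ge_atTop 1] with n hn
      have hn0 : ((n : ℝ)) ≠ 0 := Nat.cast_ne_zero.2 (by omega)
      have hA1 : A n ≠ 0 := ne_of_gt (hApos n)
      have hA2 : A (n + 1) ≠ 0 := ne_of_gt (hApos (n + 1))
      rw [hc]
      dsimp only
      field_simp
      push_cast; ring
    have h10 := hT1.mul hT2
    rw [mul_one] at h10
    exact Tendsto.congr' heq h10
  have hT4 := hT3.comp (tendsto_sub_atTop_nat 1)
  refine Tendsto.congr' ?_ hT4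
  filter_upwards [eventually_ge_atTop 1] with n hn
  have he : n - 1 + 1 = n := by omega
  simp only [Function.comp]
  rw [he]


lemma ratio_gap (A : ℕ → ℝ) (hApos : ∀ n, 0 < A n)
    (h1 : Tendsto (fun n => A (n - 1) / A n) atTop (nhds 1)) (m : ℕ) :
    Tendsto (fun n => A (n - m) / A n) atTop (nhds 1) := by
  induction m with
  | zero =>
    simp only [Nat.sub_zero]
    have he : (fun n => A n / A n) = fun _ => (1:ℝ) :=
      funext fun n => div_self (ne_of_gt (hApos n))
    rw [he]
    exact tendsto_const_nhds
  | succ m ih =>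
    have hcomp := h1.comp (tendsto_sub_atTop_nat m)
    have hmul := hcomp.mul ih
    rw [mul_one] at hmul
    refine Tendsto.congr (fun n => ?_) hmul
    show (A ((n - m) - 1) / A (n - m)) * (A (n - m) / A n) = A (n - (m + 1)) / A n
    rw [div_mul_div_cancel₀ (ne_of_gt (hApos (n - m))),
      show n - m - 1 = n - (m + 1) from by omega]

end FoF

open FoF in
/-- **Table 1, third row (cluster sizes, `a = −t`), Appendix H**: under the generalized
negative binomial process with discount `a = −t` (`t` a positive integer), so that
`w_j = γ₀ Γ(j+t) p^{j+t}/(Γ(1+t) j!)`, the `r`-th descending factorial moment of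
`M_{i,n}` converges to `(Γ(i+t) γ₀ p^{t}/(Γ(1+t) i!))^r` as `n → ∞`. -/
theorem FoF_factorial_moment_limit_neg_discount (t : ℕ) (ht : 1 ≤ t)
    (γ₀ p : ℝ) (hγ : 0 < γ₀) (hp : p ∈ Set.Ioo (0 : ℝ) 1)
    (i r : ℕ) (hi : 1 ≤ i) (hr : 1 ≤ r)
    (w : ℕ → ℝ)
    (hw : ∀ j : ℕ, 1 ≤ j →
      w j = γ₀ * Real.Gamma ((j : ℝ) + (t : ℝ)) * p ^ (j + t) /
        (Real.Gamma (1 + (t : ℝ)) * (Nat.factorial j : ℝ))) :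
    Tendsto (fun n : ℕ =>
        (∑ f ∈ (Fintype.piFinset fun _ : Fin n => Finset.range (n + 1)).filter
            (fun f => ∑ k : Fin n, (k.1 + 1) * f k = n),
          (∏ k : Fin n, w (k.1 + 1) ^ (f k) / (Nat.factorial (f k) : ℝ)) *
            (if h : i ≤ n then
              ∏ k ∈ Finset.range r, ((f ⟨i - 1, by omega⟩ : ℝ) - (k : ℝ))
            else 0)) /
        ∑ f ∈ (Fintype.piFinset fun _ : Fin n => Finset.range (n + 1)).filter
            (fun f => ∑ k : Fin n, (k.1 + 1) * f k = n),
          ∏ k : Fin n, w (k.1 + 1) ^ (f k) / (Nat.factorial (f k) : ℝ))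
      atTop
      (nhds ((Real.Gamma ((i : ℝ) + (t : ℝ)) * γ₀ * p ^ t /
        (Real.Gamma (1 + (t : ℝ)) * (Nat.factorial i : ℝ))) ^ r)) := by
  obtain ⟨hp0, hp1⟩ := hp
  have hpne : p ≠ 0 := ne_of_gt hp0
  have hGt : Real.Gamma (1 + (t : ℝ)) = (Nat.factorial t : ℝ) := by
    rw [add_comm, Real.Gamma_nat_eq_factorial]
  -- the weights with the geometric part removed
  set a : ℕ → ℝ := fun j => w j / p ^ j with ha_def
  have hwa : ∀ N n : ℕ, S w N n = p ^ n * S a N n := by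
    intro N n
    have : S w N n = S (fun j => a j * p ^ j) N n := by
      unfold S
      refine Finset.sum_congr rfl fun f _ => Finset.prod_congr rfl fun k _ => ?_
      rw [ha_def]
      dsimp only
      rw [div_mul_cancel₀ _ (pow_ne_zero _ hpne)]
    rw [this, S_scale]
  have ha : ∀ j : ℕ, 1 ≤ j → a j
      = γ₀ * p ^ t * (Nat.factorial (j + t - 1) : ℝ)
        / ((Nat.factorial t : ℝ) * (Nat.factorial j : ℝ)) := by
    intro j hj
    have hG : Real.Gamma ((j : ℝ) + (t : ℝ)) = (Nat.factorial (j + t - 1) : ℝ) := by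
      have hc : (j : ℝ) + (t : ℝ) = ((j + t - 1 : ℕ) : ℝ) + 1 := by
        have : ((j + t - 1 : ℕ) : ℝ) = (j : ℝ) + (t : ℝ) - 1 := by
          push_cast [Nat.cast_sub (by omega : 1 ≤ j + t)]
          ring
        rw [this]; ring
      rw [hc, Real.Gamma_nat_eq_factorial]
    rw [ha_def]
    dsimp only
    rw [hw j hj, hG, hGt, pow_add]
    have h1 : (Nat.factorial t : ℝ) ≠ 0 := Nat.cast_ne_zero.2 (Nat.factorial_ne_zero _)
    have h2 : (Nat.factorial j : ℝ) ≠ 0 := Nat.cast_ne_zero.2 (Nat.factorial_ne_zero _)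
    have h3 : p ^ j ≠ 0 := pow_ne_zero _ hpne
    field_simp
  have hapos : ∀ j : ℕ, 1 ≤ j → 0 < a j := by
    intro j hj
    rw [ha j hj]
    have f1 : (0:ℝ) < (Nat.factorial (j + t - 1) : ℝ) := by
      exact_mod_cast Nat.factorial_pos _
    have f2 : (0:ℝ) < (Nat.factorial t : ℝ) := by exact_mod_cast Nat.factorial_pos _
    have f3 : (0:ℝ) < (Nat.factorial j : ℝ) := by exact_mod_cast Nat.factorial_pos _
    positivity
  set A : ℕ → ℝ := fun n => S a n n with hA_def
  have hApos : ∀ n, 0 < A n := fun n => S_pos a hapos n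
  set b : ℕ → ℝ := fun j => (j : ℝ) * a j with hb_def
  have hrec : ∀ n : ℕ, (n : ℝ) * A n = ∑ j ∈ range n, b (j + 1) * A (n - (j + 1)) := by
    intro n
    rw [hA_def]
    dsimp only
    rw [S_rec a n]
    refine Finset.sum_congr rfl fun j _ => ?_
    rw [hb_def]
    push_cast
    ring
  -- the fundamental ratio identity for b
  have hbratio : ∀ j : ℕ, 1 ≤ j → (j : ℝ) * b (j + 1) = ((j : ℝ) + (t : ℝ)) * b j := by
    intro j hj
    rw [hb_def]
    dsimp only
    rw [ha j hj, ha (j + 1) (by omega)]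
    have e1 : j + 1 + t - 1 = (j + t - 1) + 1 := by omega
    rw [e1, Nat.factorial_succ, Nat.factorial_succ j]
    have e2 : ((j + t - 1 : ℕ) : ℝ) + 1 = (j : ℝ) + (t : ℝ) := by
      push_cast [Nat.cast_sub (by omega : 1 ≤ j + t)]
      ring
    have h1 : (Nat.factorial t : ℝ) ≠ 0 := Nat.cast_ne_zero.2 (Nat.factorial_ne_zero _)
    have h2 : (Nat.factorial j : ℝ) ≠ 0 := Nat.cast_ne_zero.2 (Nat.factorial_ne_zero _)
    have h3 : (Nat.factorial (j + t - 1) : ℝ) ≠ 0 := Nat.cast_ne_zero.2 (Nat.factorial_ne_zero _)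
    push_cast
    rw [← e2]
    push_cast
    field_simp
  have hbpos : ∀ j : ℕ, 1 ≤ j → 0 < b j := by
    intro j hj
    rw [hb_def]
    have : (0:ℝ) < (j:ℝ) := by exact_mod_cast hj
    exact mul_pos this (hapos j hj)
  have hmono : ∀ j : ℕ, 1 ≤ j → b j ≤ b (j + 1) := by
    intro j hj
    have h := hbratio j hj
    have hjpos : (0:ℝ) < (j:ℝ) := by exact_mod_cast hj
    have htpos : (0:ℝ) ≤ (t:ℝ) := by positivity
    nlinarith [hbpos j hj]
  have hdiff : ∀ j : ℕ, 1 ≤ j → b (j + 1) - b j ≤ ((t : ℝ) / (j : ℝ)) * b (j + 1) := by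
    intro j hj
    have h := hbratio j hj
    have hjpos : (0:ℝ) < (j:ℝ) := by exact_mod_cast hj
    -- b (j+1) - b j = (t/j) * b j ≤ (t/j) * b (j+1)
    have hbj : b j ≤ b (j + 1) := hmono j hj
    have e : b (j + 1) - b j = ((t : ℝ) / (j : ℝ)) * b j := by
      field_simp
      nlinarith
    rw [e]
    have htj : (0:ℝ) ≤ (t:ℝ) / (j:ℝ) := by positivity
    exact mul_le_mul_of_nonneg_left hbj htj
  have hstep : Tendsto (fun n => A (n - 1) / A n) atTop (nhds 1) :=
    ratio_limit A b (t : ℝ) (by positivity) hApos hrec (hbpos 1 le_rfl) hmono hdiff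
  have hgap : Tendsto (fun n => A (n - i * r) / A n) atTop (nhds 1) :=
    ratio_gap A hApos hstep (i * r)
  -- the limit value
  have hai : a i = Real.Gamma ((i : ℝ) + (t : ℝ)) * γ₀ * p ^ t /
      (Real.Gamma (1 + (t : ℝ)) * (Nat.factorial i : ℝ)) := by
    rw [ha_def]
    dsimp only
    rw [hw i hi, pow_add]
    have h1 : Real.Gamma (1 + (t : ℝ)) ≠ 0 := by
      rw [hGt]; exact Nat.cast_ne_zero.2 (Nat.factorial_ne_zero _)
    have h2 : (Nat.factorial i : ℝ) ≠ 0 := Nat.cast_ne_zero.2 (Nat.factorial_ne_zero _)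
    have h3 : p ^ i ≠ 0 := pow_ne_zero _ hpne
    field_simp
  have hmain := hgap.const_mul ((a i) ^ r)
  rw [mul_one] at hmain
  rw [← hai]
  refine Tendsto.congr' ?_ hmain
  filter_upwards [eventually_ge_atTop (i * r + i)] with n hn
  have hirn : i * r ≤ n := by omega
  have hin : i ≤ n := by omega
  -- rewrite the dite
  have hk0 : i - 1 < n := by omega
  set k0 : Fin n := ⟨i - 1, hk0⟩ with hk0def
  have hk0v : (k0 : ℕ) + 1 = i := by
    rw [hk0def]
    simp [Nat.sub_add_cancel hi]
  -- numerator
  have hnum : (∑ f ∈ T n n,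
        (∏ k : Fin n, w (k.1 + 1) ^ (f k) / (Nat.factorial (f k) : ℝ)) *
          (if h : i ≤ n then
            ∏ k ∈ Finset.range r, ((f ⟨i - 1, by omega⟩ : ℝ) - (k : ℝ))
          else 0))
      = w i ^ r * S w n (n - i * r) := by
    have hd : ((k0 : ℕ) + 1) * r ≤ n := by rw [hk0v]; exact hirn
    have hs := S_shift w n k0 r hd
    rw [hk0v] at hs
    rw [← hs]
    refine Finset.sum_congr rfl fun f _ => ?_
    rw [dif_pos hin]
    ring
  have hden : 0 < S w n n := by
    have := S_pos a hapos n
    have h := hwa n n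
    rw [h]
    positivity
  symm
  calc (∑ f ∈ T n n,
        (∏ k : Fin n, w (k.1 + 1) ^ (f k) / (Nat.factorial (f k) : ℝ)) *
          (if h : i ≤ n then
            ∏ k ∈ Finset.range r, ((f ⟨i - 1, by omega⟩ : ℝ) - (k : ℝ))
          else 0)) / S w n n
      = (w i ^ r * S w n (n - i * r)) / S w n n := by rw [hnum]
    _ = (w i ^ r * (p ^ (n - i * r) * A (n - i * r))) / (p ^ n * A n) := by
        rw [hwa n (n - i * r), hwa n n, hA_def]
        dsimp only
        rw [S_stable a (Nat.sub_le n (i * r))]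
    _ = a i ^ r * (A (n - i * r) / A n) := by
        have hwi : w i = a i * p ^ i := by
          rw [ha_def]; dsimp only; rw [div_mul_cancel₀ _ (pow_ne_zero _ hpne)]
        have hppow : p ^ (i * r) * p ^ (n - i * r) = p ^ n := by
          rw [← pow_add]
          congr 1
          omega
        have hAn : A n ≠ 0 := ne_of_gt (hApos n)
        have hpn : p ^ n ≠ 0 := pow_ne_zero _ hpne
        rw [hwi, mul_pow, ← pow_mul]
        field_simp
        rw [← hppow]; ring
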